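/- Let A₁ be a classical family in a P-tracial algebra. Then for every k ≥ 1, every p ∈ P_k and every a₁,…,a_k ∈ A₁: κ_p(a₁,…,a_k) = Π_{b ∈ p∨id_k} δ_{p_{|b} = 0_{|b|/2}} · cum_{|b|/2}((a_i)_{i ∈ b∩{1,…,k}}), i.e. the P-cumulant is the product, over the cycles b of p, of the classical cumulant of the elements indexed by b when the extraction of p to b is the one-block partition, and is 0 if the extraction of p to some cycle is not the one-block partition. -/

import Mathlib

open scoped Classical

/-- Partitions of `{1,…,k,1′,…,k′}`, modelled as setoids on `Fin k ⊕ Fin k`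
(unprimed elements on the left, primed on the right). -/
abbrev PP (k : ℕ) := Setoid (Fin k ⊕ Fin k)

noncomputable instance setoidFintypeInst {α : Type*} [Fintype α] : Fintype (Setoid α) :=
  Fintype.ofInjective
    (fun s : Setoid α => (Finset.univ.filter fun p : α × α => s p.1 p.2))
    (by
      intro s t h
      have h' : ∀ x y : α, s x y ↔ t x y := by
        intro x y
        have := Finset.ext_iff.mp h (x, y)
        simpa using this
      exact Setoid.ext h')

/-- number of blocks of a partition -/
noncomputable def nC {α : Type*} (s : Setoid α) : ℕ := Nat.card (Quotient s)

/-- the identity partition `{{i,i′}}`. -/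
def idP (k : ℕ) : PP k := Setoid.ker (Sum.elim (id : Fin k → Fin k) id)

/-- twice the distance `d(p,q) = (nc p + nc q)/2 − nc (p ⊔ q)`. -/
noncomputable def d2 {k : ℕ} (p q : PP k) : ℤ := (nC p : ℤ) + nC q - 2 * nC (p ⊔ q)

/-- the geodesic order on partitions: `q ≤ p` iff `d(id,q) + d(q,p) = d(id,p)`. -/
def pLe {k : ℕ} (q p : PP k) : Prop := d2 (idP k) q + d2 q p = d2 (idP k) p

/-- a permutation `σ` seen as the partition `{{i, σ(i)′}}`. -/
def permToP {k : ℕ} (σ : Equiv.Perm (Fin k)) : PP k :=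
  Setoid.ker (Sum.elim (fun i => σ i) (fun j => j))

/-- tensor product of partitions: place `q` to the right of `p`. -/
def ptensor {k l : ℕ} (p : PP k) (q : PP l) : PP (k + l) :=
  Setoid.ker (fun x : Fin (k + l) ⊕ Fin (k + l) =>
    match x with
    | Sum.inl i =>
      (match finSumFinEquiv.symm i with
       | Sum.inl a => (Sum.inl (Quotient.mk p (Sum.inl a)) : Quotient p ⊕ Quotient q)
       | Sum.inr b => Sum.inr (Quotient.mk q (Sum.inl b)))
    | Sum.inr i =>
      (match finSumFinEquiv.symm i with
       | Sum.inl a => Sum.inl (Quotient.mk p (Sum.inr a))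
       | Sum.inr b => Sum.inr (Quotient.mk q (Sum.inr b))))

/-- transpose of a partition: exchange `i` and `i′`. -/
def ptrans {k : ℕ} (p : PP k) : PP k := Setoid.comap Sum.swap p

/-- the map exchanging `j` and `j′` for the (0-based) indices `j ≥ l`. -/
def swapAbove {k : ℕ} (l : ℕ) : Fin k ⊕ Fin k → Fin k ⊕ Fin k
  | Sum.inl i => if l ≤ (i : ℕ) then Sum.inr i else Sum.inl i
  | Sum.inr i => if l ≤ (i : ℕ) then Sum.inl i else Sum.inr i

/-- the operation `S_l` on partitions: exchange `j` and `j′` for every column `j > l`. -/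
def sOp {k : ℕ} (l : ℕ) (p : PP k) : PP k := Setoid.comap (swapAbove l) p

/-- the setoid of "same cycle of σ". -/
def sameCycleSetoid {k : ℕ} (σ : Equiv.Perm (Fin k)) : Setoid (Fin k) :=
  ⟨σ.SameCycle, ⟨fun _ => Equiv.Perm.SameCycle.refl σ _, fun h => h.symm, fun h h' => h.trans h'⟩⟩

/-- number of orbits (fixed points included) of a permutation. -/
noncomputable def cyc {k : ℕ} (σ : Equiv.Perm (Fin k)) : ℕ :=
  Nat.card (Quotient (sameCycleSetoid σ))

/-- reflection length `ℓ(σ) = k − c(σ)`. -/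
noncomputable def plen {k : ℕ} (σ : Equiv.Perm (Fin k)) : ℤ := (k : ℤ) - cyc σ

/-- the geodesic (absolute) order on permutations. -/
def permLe {k : ℕ} (τ σ : Equiv.Perm (Fin k)) : Prop := plen τ + plen (τ⁻¹ * σ) = plen σ

/-- `σ₁ ⊕ σ₂`, acting as `σ₁` on `{1,…,l}` and as the shifted copy of `σ₂` on `{l+1,…,l+m}`. -/
def sumPerm {l m : ℕ} (σ₁ : Equiv.Perm (Fin l)) (σ₂ : Equiv.Perm (Fin m)) :
    Equiv.Perm (Fin (l + m)) :=
  finSumFinEquiv.permCongr (Equiv.sumCongr σ₁ σ₂)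

/-- the setoid generated by a relation `r`. -/
def genSetoid {α : Type*} (r : α → α → Prop) : Setoid α :=
  sInf {s : Setoid α | ∀ x y, r x y → s x y}

/-- the lexicographic encoding `(j, t) ↦ ∑_{j' < j} n j' + t` of `Σ j, Fin (n j)` into
`Fin (∑ j, n j)`. -/
def encodeSigma {k : ℕ} (n : Fin k → ℕ) (x : Σ j : Fin k, Fin (n j)) : Fin (∑ j, n j) :=
  ⟨(∑ j' ∈ Finset.univ.filter fun j' => j' < x.1, n j') + (x.2 : ℕ), by
    calc (∑ j' ∈ Finset.univ.filter fun j' => j' < x.1, n j') + (x.2 : ℕ)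
        < (∑ j' ∈ Finset.univ.filter fun j' => j' < x.1, n j') + n x.1 := by
          exact Nat.add_lt_add_left x.2.isLt _
      _ = ∑ j' ∈ insert x.1 (Finset.univ.filter fun j' => j' < x.1), n j' := by
          rw [Finset.sum_insert (by simp)]
          ring
      _ ≤ ∑ j', n j' := Finset.sum_le_sum_of_subset (Finset.subset_univ _)⟩

/-- `endOf n x` identifies `x` as an external endpoint of its group: the top of the `j`-th
group if `x` is the first unprimed element, the bottom if `x` is the last primed one. -/
def endOf {k : ℕ} (n : Fin k → ℕ) :
    (Σ j : Fin k, Fin (n j)) ⊕ (Σ j : Fin k, Fin (n j)) → Option (Fin k ⊕ Fin k)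
  | Sum.inl ⟨j, t⟩ => if (t : ℕ) = 0 then some (Sum.inl j) else none
  | Sum.inr ⟨j, t⟩ => if (t : ℕ) + 1 = n j then some (Sum.inr j) else none

/-- the elementary relations defining the partition `Insⁿ(p) ∘ σ` appearing in the
product-compatibility axiom: within the `j`-th group, the primed (bottom) vertex of a
factor is glued to the unprimed (top) vertex of the next factor, and the external
endpoints of the groups are glued according to `p`. -/
def chainRel {k : ℕ} (n : Fin k → ℕ) (p : PP k) :
    ((Σ j : Fin k, Fin (n j)) ⊕ (Σ j : Fin k, Fin (n j))) →
      ((Σ j : Fin k, Fin (n j)) ⊕ (Σ j : Fin k, Fin (n j))) → Prop :=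
  fun x y =>
    (∃ (j : Fin k) (t : ℕ) (h1 : t + 1 < n j),
        x = Sum.inr ⟨j, ⟨t, Nat.lt_of_succ_lt h1⟩⟩ ∧ y = Sum.inl ⟨j, ⟨t + 1, h1⟩⟩) ∨
    (∃ u v, p u v ∧ endOf n x = some u ∧ endOf n y = some v)

/-- the partition `Insⁿ_i(p) ∘ σ ∈ P_{∑ n_j}` of the product-compatibility axiom. -/
def insPart {k : ℕ} (n : Fin k → ℕ) (p : PP k) : PP (∑ j, n j) :=
  genSetoid fun x y =>
    ∃ u v, chainRel n p u v ∧
      x = Sum.map (encodeSigma n) (encodeSigma n) u ∧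
      y = Sum.map (encodeSigma n) (encodeSigma n) v

/-- relabelling of the columns of a partition by a permutation: `σ ∘ p ∘ σ⁻¹`. -/
def relabel {k : ℕ} (σ : Equiv.Perm (Fin k)) (p : PP k) : PP k :=
  Setoid.comap (Sum.map σ.symm σ.symm) p

/-- A `P`-tracial algebra: a complex algebra `A` together with `k`-linear forms
`m_p : A^k → ℂ`, indexed by the partitions `p ∈ P_k`, which are symmetric under
simultaneous relabelling of the columns and of the arguments, and compatible with the
product of `A`. -/
structure PTracial (A : Type*) [Ring A] [Algebra ℂ A] where
  m : ∀ k : ℕ, PP k → (Fin k → A) → ℂ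
  m_add : ∀ (k : ℕ) (p : PP k) (a : Fin k → A) (s : Fin k) (x y : A),
    m k p (Function.update a s (x + y)) =
      m k p (Function.update a s x) + m k p (Function.update a s y)
  m_smul : ∀ (k : ℕ) (p : PP k) (a : Fin k → A) (s : Fin k) (c : ℂ) (x : A),
    m k p (Function.update a s (c • x)) = c * m k p (Function.update a s x)
  m_symm : ∀ (k : ℕ) (p : PP k) (σ : Equiv.Perm (Fin k)) (a : Fin k → A),
    m k p a = m k (relabel σ p) fun s => a (σ.symm s)
  m_prod : ∀ (k : ℕ) (p : PP k) (n : Fin k → ℕ), (∀ j, 0 < n j) →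
    ∀ (a : ∀ j : Fin k, Fin (n j) → A) (b : Fin (∑ j, n j) → A),
      (∀ (j : Fin k) (t : Fin (n j)), b (encodeSigma n ⟨j, t⟩) = a j t) →
      m k p (fun j => (List.ofFn (a j)).prod) = m (∑ j, n j) (insPart n p) b

/-- extraction of a partition to a subset `J` of its columns. -/
def extractP {k : ℕ} (p : PP k) (J : Finset (Fin k)) : PP J.card :=
  Setoid.comap
    (Sum.map (fun t => ((J.orderIsoOfFin rfl t : J) : Fin k))
      (fun t => ((J.orderIsoOfFin rfl t : J) : Fin k))) p

/-- columns `s` and `t` meet a common block of `p`. -/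
def colRel {k : ℕ} (p : PP k) (s t : Fin k) : Prop :=
  p (Sum.inl s) (Sum.inl t) ∨ p (Sum.inl s) (Sum.inr t) ∨
    p (Sum.inr s) (Sum.inl t) ∨ p (Sum.inr s) (Sum.inr t)

/-- `P`-freeness of two subalgebras, relative to the `P`-cumulant forms `κ`:
not-compatible mixed cumulants vanish, and cumulants factorize over tensor products. -/
def PFree {A : Type*} [Ring A] [Algebra ℂ A]
    (κ : ∀ k : ℕ, PP k → (Fin k → A) → ℂ) (A₁ A₂ : Subalgebra ℂ A) : Prop :=
  (∀ (k : ℕ) (p : PP k) (a : Fin k → A), (∀ s, a s ∈ A₁ ∨ a s ∈ A₂) →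
    (∃ s s' : Fin k, a s ∈ A₁ ∧ a s' ∈ A₂ ∧ colRel p s s') → κ k p a = 0) ∧
  (∀ (k₁ k₂ : ℕ) (p₁ : PP k₁) (p₂ : PP k₂) (a : Fin k₁ → A) (b : Fin k₂ → A),
    (∀ s, a s ∈ A₁) → (∀ s, b s ∈ A₂) →
    κ (k₁ + k₂) (ptensor p₁ p₂) (Fin.append a b) = κ k₁ p₁ a * κ k₂ p₂ b)

/-- the partition of the columns into the cycles of `p` (the blocks of `p ∨ id_k`). -/
def colSetoid {k : ℕ} (p : PP k) : Setoid (Fin k) :=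
  Setoid.comap Sum.inl (p ⊔ idP k)

/-- the blocks of a set partition of `Fin k`, as a finite set of finite sets. -/
noncomputable def classesOf {k : ℕ} (q : Setoid (Fin k)) : Finset (Finset (Fin k)) :=
  Finset.univ.image fun j => Finset.univ.filter fun j' => q j j'

section Aux

variable {α β : Type*}

lemma setoid_comap_rel (f : α → β) (s : Setoid β) (x y : α) :
    (Setoid.comap f s) x y ↔ s (f x) (f y) := Iff.rfl

lemma nC_comap_surjective [Fintype α] (f : α → β) (hf : Function.Surjective f)
    (s : Setoid β) : nC (Setoid.comap f s) = nC s := by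
  rw [Setoid.comap_eq]
  unfold nC
  have h2 : Function.Surjective ((Quotient.mk'' : β → Quotient s) ∘ f) :=
    (Function.Surjective.comp Quotient.mk''_surjective hf)
  exact Nat.card_congr (Setoid.quotientKerEquivOfSurjective _ h2)

lemma quot_map_surj {s t : Setoid α} (h : s ≤ t) :
    Function.Surjective (fun x : Quotient s => Quotient.liftOn x (Quotient.mk t)
      (fun a b hab => Quotient.sound (h hab))) := by
  intro q
  obtain ⟨x, rfl⟩ := Quotient.exists_rep q
  exact ⟨Quotient.mk s x, rfl⟩

lemma nC_le_of_le [Fintype α] {s t : Setoid α} (h : s ≤ t) : nC t ≤ nC s :=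
  Nat.card_le_card_of_surjective _ (quot_map_surj h)

lemma eq_of_le_of_nC_eq [Fintype α] {s t : Setoid α} (h : s ≤ t) (hc : nC s = nC t) :
    s = t := by
  classical
  have hinj : Function.Injective (fun x : Quotient s => Quotient.liftOn x (Quotient.mk t)
      (fun a b hab => Quotient.sound (h hab))) := by
    have hfin : Nat.card (Quotient t) ≤ Nat.card (Quotient s) := le_of_eq hc.symm
    exact Function.Surjective.injective_of_finite
      (Fintype.equivOfCardEq (by
        have h1 : Fintype.card (Quotient s) = nC s := (Nat.card_eq_fintype_card).symm
        have h2 : Fintype.card (Quotient t) = nC t := (Nat.card_eq_fintype_card).symm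
        omega)) (quot_map_surj h)
  ext x y
  constructor
  · exact fun hxy => h hxy
  · intro hxy
    have : Quotient.mk s x = Quotient.mk s y := hinj (Quotient.sound hxy)
    exact Quotient.exact this

end Aux

section Order

variable {k : ℕ}

lemma d2_nonneg (p q : PP k) : 0 ≤ d2 p q := by
  have h1 := nC_le_of_le (le_sup_left : p ≤ p ⊔ q)
  have h2 := nC_le_of_le (le_sup_right : q ≤ p ⊔ q)
  unfold d2; omega

lemma d2_self (p : PP k) : d2 p p = 0 := by unfold d2; rw [sup_idem]; ring

lemma eq_of_d2_eq_zero {p q : PP k} (h : d2 p q = 0) : p = q := by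
  have h1 := nC_le_of_le (le_sup_left : p ≤ p ⊔ q)
  have h2 := nC_le_of_le (le_sup_right : q ≤ p ⊔ q)
  have hp : p = p ⊔ q := eq_of_le_of_nC_eq le_sup_left (by unfold d2 at h; omega)
  have hq : q = p ⊔ q := eq_of_le_of_nC_eq le_sup_right (by unfold d2 at h; omega)
  exact hp.trans hq.symm

lemma pLe_refl (p : PP k) : pLe p p := by unfold pLe; rw [d2_self]; ring

lemma d2_lt_of_pLe {q p : PP k} (h : pLe q p) (hne : q ≠ p) :
    d2 (idP k) q < d2 (idP k) p := by
  unfold pLe at h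
  have h1 := d2_nonneg q p
  have h2 : d2 q p ≠ 0 := fun hz => hne (eq_of_d2_eq_zero hz)
  omega

end Order
section Full

variable {k : ℕ}

/-- the column of a vertex. -/
def colv {k : ℕ} : Fin k ⊕ Fin k → Fin k := Sum.elim id id

lemma colv_surj : Function.Surjective (colv (k := k)) := fun i => ⟨Sum.inl i, rfl⟩

/-- the full partition with blocks `b ∪ b′` for `b` a block of `ρ`. -/
def toFull (ρ : Setoid (Fin k)) : PP k := Setoid.comap colv ρ

lemma toFull_rel (ρ : Setoid (Fin k)) (x y : Fin k ⊕ Fin k) :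
    (toFull ρ) x y ↔ ρ (colv x) (colv y) := Iff.rfl

lemma comap_sup_surjective {α β : Type*} (f : α → β) (hf : Function.Surjective f)
    (s t : Setoid β) : Setoid.comap f (s ⊔ t) = Setoid.comap f s ⊔ Setoid.comap f t := by
  apply le_antisymm
  · intro x y hxy
    have hxy' : (s ⊔ t) (f x) (f y) := hxy
    rw [Setoid.sup_eq_eqvGen] at hxy'
    have key : ∀ u v, Relation.EqvGen (fun a b => s a b ∨ t a b) u v →
        ∀ x y, f x = u → f y = v → (Setoid.comap f s ⊔ Setoid.comap f t) x y := by
      intro u v huv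
      induction huv with
      | rel u v h =>
        intro x y hx hy
        rcases h with h | h
        · exact le_sup_left (α := Setoid α) (show s (f x) (f y) by rw [hx, hy]; exact h)
        · exact le_sup_right (α := Setoid α) (show t (f x) (f y) by rw [hx, hy]; exact h)
      | refl u =>
        intro x y hx hy
        exact le_sup_left (α := Setoid α)
          (show s (f x) (f y) by rw [hx, hy])
      | symm u v h ih =>
        intro x y hx hy
        exact Setoid.symm' _ (ih y x hy hx)
      | trans u v w h1 h2 ih1 ih2 =>
        intro x y hx hy
        obtain ⟨z, hz⟩ := hf v
        exact Setoid.trans' _ (ih1 x z hx hz) (ih2 z y hz hy)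
    exact key _ _ hxy' x y rfl rfl
  · exact sup_le (fun x y hxy => le_sup_left (α := Setoid β) hxy)
      (fun x y hxy => le_sup_right (α := Setoid β) hxy)

lemma idP_eq_ker : idP k = Setoid.ker (colv (k := k)) := rfl

lemma idP_rel (x y : Fin k ⊕ Fin k) : (idP k) x y ↔ colv x = colv y := Iff.rfl

lemma idP_le_toFull (ρ : Setoid (Fin k)) : idP k ≤ toFull ρ := by
  intro x y h
  have h' : colv x = colv y := h
  show ρ (colv x) (colv y)
  rw [h']

lemma nC_toFull (ρ : Setoid (Fin k)) : nC (toFull ρ) = nC ρ :=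
  nC_comap_surjective _ colv_surj _

lemma toFull_sup (ρ ρ' : Setoid (Fin k)) : toFull (ρ ⊔ ρ') = toFull ρ ⊔ toFull ρ' :=
  comap_sup_surjective _ colv_surj _ _

lemma fullChar {q : PP k} (h : idP k ≤ q) : toFull (Setoid.comap Sum.inl q) = q := by
  have hpair : ∀ i : Fin k, q (Sum.inl i) (Sum.inr i) := by
    intro i
    exact h (show (idP k) (Sum.inl i) (Sum.inr i) from rfl)
  ext x y
  show q (Sum.inl (colv x)) (Sum.inl (colv y)) ↔ q x y
  have hx : ∀ z : Fin k ⊕ Fin k, q (Sum.inl (colv z)) z := by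
    intro z
    cases z with
    | inl i => exact Setoid.refl' q _
    | inr i => exact hpair i
  constructor
  · intro hr
    exact Setoid.trans' q (Setoid.trans' q (Setoid.symm' q (hx x)) hr) (hx y)
  · intro hr
    exact Setoid.trans' q (Setoid.trans' q (hx x) hr) (Setoid.symm' q (hx y))

lemma comap_inl_toFull (ρ : Setoid (Fin k)) : Setoid.comap Sum.inl (toFull ρ) = ρ := by
  ext i j; exact Iff.rfl

lemma sup_idP_toFull (p : PP k) : p ⊔ idP k = toFull (colSetoid p) := by
  have h : idP k ≤ p ⊔ idP k := le_sup_right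
  exact (fullChar h).symm

lemma colSetoid_toFull (ρ : Setoid (Fin k)) : colSetoid (toFull ρ) = ρ := by
  unfold colSetoid
  rw [sup_eq_left.mpr (idP_le_toFull ρ), comap_inl_toFull]

lemma nC_idP : nC (idP k) = k := by
  unfold nC
  rw [idP_eq_ker]
  rw [Nat.card_congr (Setoid.quotientKerEquivOfSurjective _ colv_surj)]
  simp

lemma pLe_toFull_iff (π : Setoid (Fin k)) (p : PP k) :
    pLe (toFull π) p ↔ π ≤ colSetoid p := by
  have e1 : nC (idP k ⊔ toFull π) = nC π := by
    rw [sup_eq_right.mpr (idP_le_toFull π), nC_toFull]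
  have e2 : nC (idP k ⊔ p) = nC (colSetoid p) := by
    rw [sup_comm, sup_idP_toFull, nC_toFull]
  have e3 : nC (toFull π ⊔ p) = nC (π ⊔ colSetoid p) := by
    have : toFull π ⊔ p = toFull (π ⊔ colSetoid p) := by
      rw [toFull_sup, ← sup_idP_toFull]
      rw [← sup_assoc, sup_comm (toFull π) p, sup_assoc, sup_eq_left.mpr (idP_le_toFull π)]
    rw [this, nC_toFull]
  have e4 : nC (toFull π) = nC π := nC_toFull π
  unfold pLe d2
  rw [e1, e2, e3, e4, nC_idP]
  constructor
  · intro h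
    have hle : colSetoid p ≤ π ⊔ colSetoid p := le_sup_right
    have : nC (colSetoid p) = nC (π ⊔ colSetoid p) := by omega
    have := eq_of_le_of_nC_eq hle this
    rw [← sup_eq_right]
    exact this.symm
  · intro h
    rw [sup_eq_right.mpr h]
    ring

end Full
section Extract

variable {k : ℕ}

/-- increasing enumeration of `J`. -/
noncomputable def embJ (J : Finset (Fin k)) : Fin J.card → Fin k :=
  fun t => ((J.orderIsoOfFin rfl t : J) : Fin k)

lemma embJ_mem (J : Finset (Fin k)) (t : Fin J.card) : embJ J t ∈ J :=
  (J.orderIsoOfFin rfl t).2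

lemma embJ_strictMono (J : Finset (Fin k)) : StrictMono (embJ J) := by
  intro s t hst
  exact Subtype.coe_lt_coe.mpr ((J.orderIsoOfFin rfl).strictMono hst)

lemma embJ_inj (J : Finset (Fin k)) : Function.Injective (embJ J) :=
  (embJ_strictMono J).injective

/-- inverse of `embJ` on `J`. -/
noncomputable def pullJ (J : Finset (Fin k)) (i : Fin k) (hi : i ∈ J) : Fin J.card :=
  (J.orderIsoOfFin rfl).symm ⟨i, hi⟩

lemma embJ_pullJ (J : Finset (Fin k)) (i : Fin k) (hi : i ∈ J) :
    embJ J (pullJ J i hi) = i := by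
  unfold embJ pullJ
  rw [OrderIso.apply_symm_apply]

lemma pullJ_embJ (J : Finset (Fin k)) (t : Fin J.card) :
    pullJ J (embJ J t) (embJ_mem J t) = t := by
  apply embJ_inj J
  rw [embJ_pullJ]

lemma extract_rel (p : PP k) (J : Finset (Fin k)) (u v : Fin J.card ⊕ Fin J.card) :
    (extractP p J) u v ↔ p (Sum.map (embJ J) (embJ J) u) (Sum.map (embJ J) (embJ J) v) :=
  Iff.rfl

lemma colv_map {l : ℕ} (f : Fin l → Fin k) (x : Fin l ⊕ Fin l) :
    colv (Sum.map f f x) = f (colv x) := by cases x <;> rfl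

lemma supid_rel (p : PP k) (x y : Fin k ⊕ Fin k) :
    (p ⊔ idP k) x y ↔ (colSetoid p) (colv x) (colv y) := by
  rw [sup_idP_toFull]
  exact Iff.rfl

lemma rel_col (p : PP k) {x y : Fin k ⊕ Fin k} (h : p x y) :
    (colSetoid p) (colv x) (colv y) :=
  (supid_rel p x y).mp (le_sup_left (α := PP k) h)

/-- the pullback of a vertex with column in `J`. -/
noncomputable def pullV (J : Finset (Fin k)) :
    (x : Fin k ⊕ Fin k) → colv x ∈ J → Fin J.card ⊕ Fin J.card
  | Sum.inl i, h => Sum.inl (pullJ J i h)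
  | Sum.inr i, h => Sum.inr (pullJ J i h)

lemma colv_pullV (J : Finset (Fin k)) (x : Fin k ⊕ Fin k) (h : colv x ∈ J) :
    colv (pullV J x h) = pullJ J (colv x) h := by cases x <;> rfl

lemma map_pullV (J : Finset (Fin k)) (x : Fin k ⊕ Fin k) (h : colv x ∈ J) :
    Sum.map (embJ J) (embJ J) (pullV J x h) = x := by
  cases x with
  | inl i => exact congrArg Sum.inl (embJ_pullJ J i h)
  | inr i => exact congrArg Sum.inr (embJ_pullJ J i h)

lemma pullV_map (J : Finset (Fin k)) (u : Fin J.card ⊕ Fin J.card) (h : _) :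
    pullV J (Sum.map (embJ J) (embJ J) u) h = u := by
  cases u with
  | inl t => show Sum.inl (pullJ J (embJ J t) _) = _; rw [pullJ_embJ]
  | inr t => show Sum.inr (pullJ J (embJ J t) _) = _; rw [pullJ_embJ]

/-- transfer of the join with `id` through an extraction to a union of cycles. -/
lemma transfer (p : PP k) (J : Finset (Fin k))
    (hJ : ∀ i j, (colSetoid p) i j → (i ∈ J ↔ j ∈ J))
    (u v : Fin J.card ⊕ Fin J.card) :
    (extractP p J ⊔ idP J.card) u v ↔
      (p ⊔ idP k) (Sum.map (embJ J) (embJ J) u) (Sum.map (embJ J) (embJ J) v) := by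
  constructor
  · intro h
    have hle : extractP p J ⊔ idP J.card ≤
        Setoid.comap (Sum.map (embJ J) (embJ J)) (p ⊔ idP k) := by
      apply sup_le
      · intro u v huv
        exact le_sup_left (α := PP k) ((extract_rel p J u v).mp huv)
      · intro u v huv
        have : colv u = colv v := huv
        apply le_sup_right (α := PP k)
        show colv (Sum.map (embJ J) (embJ J) u) = colv (Sum.map (embJ J) (embJ J) v)
        rw [colv_map, colv_map, this]
    exact hle h
  · intro h
    classical
    set g : Fin k ⊕ Fin k → Quotient (extractP p J ⊔ idP J.card) ⊕ Quotient (p ⊔ idP k) :=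
      fun x => if hx : colv x ∈ J then Sum.inl (Quotient.mk _ (pullV J x hx))
        else Sum.inr (Quotient.mk _ x) with hg
    have hker : p ⊔ idP k ≤ Setoid.ker g := by
      apply sup_le
      · intro x y hxy
        show g x = g y
        have hcol : (colSetoid p) (colv x) (colv y) := rel_col p hxy
        by_cases hx : colv x ∈ J
        · have hy : colv y ∈ J := (hJ _ _ hcol).mp hx
          rw [hg]; simp only [hx, hy, dif_pos]
          congr 1
          apply Quotient.sound
          apply le_sup_left (α := PP J.card)
          show p (Sum.map (embJ J) (embJ J) (pullV J x hx))
            (Sum.map (embJ J) (embJ J) (pullV J y hy))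
          rw [map_pullV, map_pullV]; exact hxy
        · have hy : colv y ∉ J := fun hy => hx ((hJ _ _ hcol).mpr hy)
          rw [hg]; simp only [hx, hy, dif_neg, not_false_iff]
          congr 1
          exact Quotient.sound (le_sup_left (α := PP k) hxy)
      · intro x y hxy
        show g x = g y
        have hc : colv x = colv y := hxy
        by_cases hx : colv x ∈ J
        · have hy : colv y ∈ J := hc ▸ hx
          rw [hg]; simp only [hx, hy, dif_pos]
          congr 1
          apply Quotient.sound
          apply le_sup_right (α := PP J.card)
          show colv (pullV J x hx) = colv (pullV J y hy)
          rw [colv_pullV, colv_pullV]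
          congr 1
        · have hy : colv y ∉ J := hc ▸ hx
          rw [hg]; simp only [hx, hy, dif_neg, not_false_iff]
          congr 1
          exact Quotient.sound (le_sup_right (α := PP k) hxy)
    have hgeq : g (Sum.map (embJ J) (embJ J) u) = g (Sum.map (embJ J) (embJ J) v) := hker h
    have hu : colv (Sum.map (embJ J) (embJ J) u) ∈ J := by
      rw [colv_map]; exact embJ_mem J _
    have hv : colv (Sum.map (embJ J) (embJ J) v) ∈ J := by
      rw [colv_map]; exact embJ_mem J _
    rw [hg] at hgeq
    simp only [hu, hv, dif_pos] at hgeq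
    have := Sum.inl.inj hgeq
    rw [pullV_map J u hu, pullV_map J v hv] at this
    exact Quotient.exact this

lemma col_transfer (p : PP k) (J : Finset (Fin k))
    (hJ : ∀ i j, (colSetoid p) i j → (i ∈ J ↔ j ∈ J)) (t t' : Fin J.card) :
    (colSetoid (extractP p J)) t t' ↔ (colSetoid p) (embJ J t) (embJ J t') := by
  show (extractP p J ⊔ idP J.card) (Sum.inl t) (Sum.inl t') ↔ _
  rw [transfer p J hJ]
  exact supid_rel p _ _

lemma nC_top {n : ℕ} (hn : 0 < n) : nC (⊤ : Setoid (Fin n)) = 1 := by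
  unfold nC
  have : Subsingleton (Quotient (⊤ : Setoid (Fin n))) := by
    constructor
    intro x y
    obtain ⟨a, rfl⟩ := Quotient.exists_rep x
    obtain ⟨b, rfl⟩ := Quotient.exists_rep y
    exact Quotient.sound trivial
  have : Nonempty (Quotient (⊤ : Setoid (Fin n))) :=
    ⟨Quotient.mk _ ⟨0, hn⟩⟩
  rw [Nat.card_eq_one_iff_unique]
  exact ⟨‹_›, ‹_›⟩

end Extract
section Classes

variable {k : ℕ}

lemma mem_classesOf {q : Setoid (Fin k)} {b : Finset (Fin k)} :
    b ∈ classesOf q ↔ ∃ j, b = Finset.univ.filter fun j' => q j j' := by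
  unfold classesOf
  rw [Finset.mem_image]
  constructor
  · rintro ⟨j, _, rfl⟩; exact ⟨j, rfl⟩
  · rintro ⟨j, rfl⟩; exact ⟨j, Finset.mem_univ j, rfl⟩

lemma mem_class_iff {q : Setoid (Fin k)} {j j' : Fin k} :
    j' ∈ (Finset.univ.filter fun j'' => q j j'') ↔ q j j' := by
  simp

lemma class_closed {q : Setoid (Fin k)} {j : Fin k} :
    ∀ i i', q i i' →
      (i ∈ (Finset.univ.filter fun j'' => q j j'') ↔
        i' ∈ (Finset.univ.filter fun j'' => q j j'')) := by
  intro i i' h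
  rw [mem_class_iff, mem_class_iff]
  exact ⟨fun h' => Setoid.trans' q h' h, fun h' => Setoid.trans' q h' (Setoid.symm' q h)⟩

lemma classesOf_closed {q : Setoid (Fin k)} {B : Finset (Fin k)} (hB : B ∈ classesOf q) :
    ∀ i i', q i i' → (i ∈ B ↔ i' ∈ B) := by
  obtain ⟨j, rfl⟩ := mem_classesOf.mp hB
  exact class_closed

lemma classesOf_nonempty {q : Setoid (Fin k)} {B : Finset (Fin k)} (hB : B ∈ classesOf q) :
    B.Nonempty := by
  obtain ⟨j, rfl⟩ := mem_classesOf.mp hB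
  exact ⟨j, mem_class_iff.mpr (Setoid.refl' q j)⟩

lemma notmem_compl_closed {p : PP k} {B : Finset (Fin k)}
    (hB : ∀ i i', (colSetoid p) i i' → (i ∈ B ↔ i' ∈ B)) :
    ∀ i i', (colSetoid p) i i' → (i ∈ Bᶜ ↔ i' ∈ Bᶜ) := by
  intro i i' h
  simp only [Finset.mem_compl]
  exact not_congr (hB i i' h)

lemma colSetoid_extract_top {p : PP k} {B : Finset (Fin k)}
    (hB : B ∈ classesOf (colSetoid p)) :
    colSetoid (extractP p B) = ⊤ := by
  obtain ⟨j, hBj⟩ := mem_classesOf.mp hB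
  ext t t'
  simp only [Setoid.top_def]
  constructor
  · intro _; trivial
  · intro _
    show (colSetoid (extractP p B)) t t'
    rw [col_transfer p B (classesOf_closed hB)]
    have key : ∀ i, i ∈ B → (colSetoid p) j i := by
      intro i hi
      rw [hBj] at hi
      exact mem_class_iff.mp hi
    exact Setoid.trans' _ (Setoid.symm' _ (key _ (embJ_mem B t))) (key _ (embJ_mem B t'))

lemma extract_irreducible {p : PP k} {B : Finset (Fin k)}
    (hB : B ∈ classesOf (colSetoid p)) (hcard : 0 < B.card) :
    nC (extractP p B ⊔ idP B.card) = 1 := by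
  rw [sup_idP_toFull, nC_toFull, colSetoid_extract_top hB, nC_top hcard]

end Classes

section Split

variable {k : ℕ}

lemma card_compl_add (B : Finset (Fin k)) : B.card + Bᶜ.card = k := by
  rw [Finset.card_add_card_compl]
  simp

/-- the splitting bijection `Fin (|B| + |Bᶜ|) ≃ Fin k`. -/
noncomputable def eSplit (B : Finset (Fin k)) : Fin (B.card + Bᶜ.card) ≃ Fin k :=
  Equiv.ofBijective (fun i => Sum.elim (embJ B) (embJ Bᶜ) (finSumFinEquiv.symm i))
    (by
      rw [Fintype.bijective_iff_surjective_and_card]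
      constructor
      · intro i
        by_cases hi : i ∈ B
        · exact ⟨finSumFinEquiv (Sum.inl (pullJ B i hi)), by
            simp [Equiv.symm_apply_apply, embJ_pullJ]⟩
        · have hi' : i ∈ Bᶜ := Finset.mem_compl.mpr hi
          exact ⟨finSumFinEquiv (Sum.inr (pullJ Bᶜ i hi')), by
            simp [Equiv.symm_apply_apply, embJ_pullJ]⟩
      · simp [card_compl_add])

lemma eSplit_apply (B : Finset (Fin k)) (i : Fin (B.card + Bᶜ.card)) :
    eSplit B i = Sum.elim (embJ B) (embJ Bᶜ) (finSumFinEquiv.symm i) := rfl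

/-- decomposition of a double index. -/
def Dfun {m n : ℕ} : Fin (m + n) ⊕ Fin (m + n) → (Fin m ⊕ Fin m) ⊕ (Fin n ⊕ Fin n)
  | Sum.inl i =>
    (match finSumFinEquiv.symm i with
     | Sum.inl a => Sum.inl (Sum.inl a)
     | Sum.inr b => Sum.inr (Sum.inl b))
  | Sum.inr i =>
    (match finSumFinEquiv.symm i with
     | Sum.inl a => Sum.inl (Sum.inr a)
     | Sum.inr b => Sum.inr (Sum.inr b))

lemma ptensor_rel {m n : ℕ} (p : PP m) (q : PP n) (x y : Fin (m + n) ⊕ Fin (m + n)) :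
    (ptensor p q) x y ↔
      Sum.map (Quotient.mk p) (Quotient.mk q) (Dfun x) =
        Sum.map (Quotient.mk p) (Quotient.mk q) (Dfun y) := by
  have key : ∀ z : Fin (m + n) ⊕ Fin (m + n),
      (match z with
        | Sum.inl i =>
          (match finSumFinEquiv.symm i with
           | Sum.inl a => (Sum.inl (Quotient.mk p (Sum.inl a)) : Quotient p ⊕ Quotient q)
           | Sum.inr b => Sum.inr (Quotient.mk q (Sum.inl b)))
        | Sum.inr i =>
          (match finSumFinEquiv.symm i with
           | Sum.inl a => Sum.inl (Quotient.mk p (Sum.inr a))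
           | Sum.inr b => Sum.inr (Quotient.mk q (Sum.inr b)))) =
      Sum.map (Quotient.mk p) (Quotient.mk q) (Dfun z) := by
    intro z
    cases z with
    | inl i =>
      rcases h : finSumFinEquiv.symm i with a | b <;> simp [Dfun, h]
    | inr i =>
      rcases h : finSumFinEquiv.symm i with a | b <;> simp [Dfun, h]
  constructor
  · intro h
    rw [← key x, ← key y]
    exact h
  · intro h
    exact (key x).trans (h.trans (key y).symm)

lemma map_eSplit_Dfun (B : Finset (Fin k)) (x : Fin (B.card + Bᶜ.card) ⊕ Fin (B.card + Bᶜ.card)) :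
    Sum.map (eSplit B) (eSplit B) x =
      Sum.elim (Sum.map (embJ B) (embJ B)) (Sum.map (embJ Bᶜ) (embJ Bᶜ)) (Dfun x) := by
  cases x with
  | inl i =>
    rcases h : finSumFinEquiv.symm i with a | b <;>
      simp [Dfun, h, Sum.map, eSplit_apply]
  | inr i =>
    rcases h : finSumFinEquiv.symm i with a | b <;>
      simp [Dfun, h, Sum.map, eSplit_apply]

lemma comap_eSplit_eq_ptensor (p : PP k) (B : Finset (Fin k))
    (hB : ∀ i i', (colSetoid p) i i' → (i ∈ B ↔ i' ∈ B)) :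
    Setoid.comap (Sum.map (eSplit B) (eSplit B)) p = ptensor (extractP p B) (extractP p Bᶜ) := by
  have memB : ∀ u : Fin B.card ⊕ Fin B.card, colv (Sum.map (embJ B) (embJ B) u) ∈ B := by
    intro u; rw [colv_map]; exact embJ_mem B _
  have memC : ∀ w : Fin Bᶜ.card ⊕ Fin Bᶜ.card, colv (Sum.map (embJ Bᶜ) (embJ Bᶜ) w) ∉ B := by
    intro w; rw [colv_map]
    exact Finset.mem_compl.mp (embJ_mem Bᶜ _)
  ext x y
  show p (Sum.map (eSplit B) (eSplit B) x) (Sum.map (eSplit B) (eSplit B) y) ↔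
    (ptensor (extractP p B) (extractP p Bᶜ)) x y
  rw [ptensor_rel, map_eSplit_Dfun, map_eSplit_Dfun]
  rcases Dfun x with u | w <;> rcases Dfun y with v | w'
  · simp only [Sum.elim_inl, Sum.map_inl, Sum.inl.injEq]
    rw [Quotient.eq]
    exact Iff.rfl
  · simp only [Sum.elim_inl, Sum.elim_inr, Sum.map_inl, Sum.map_inr]
    constructor
    · intro h
      exfalso
      have := rel_col p h
      exact memC w' ((hB _ _ this).mp (memB u))
    · intro h; cases h
  · simp only [Sum.elim_inl, Sum.elim_inr, Sum.map_inl, Sum.map_inr]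
    constructor
    · intro h
      exfalso
      have := rel_col p h
      exact memC w ((hB _ _ (Setoid.symm' _ this)).mp (memB v))
    · intro h; cases h
  · simp only [Sum.elim_inr, Sum.map_inr, Sum.inr.injEq]
    rw [Quotient.eq]
    exact Iff.rfl

end Split
section Reindex

variable {A : Type*} [Ring A] [Algebra ℂ A]

lemma m_reindex (T : PTracial A) {n k : ℕ} (e : Fin n ≃ Fin k) (p : PP k) (a : Fin k → A) :
    T.m k p a = T.m n (Setoid.comap (Sum.map e e) p) (fun s => a (e s)) := by
  have h : n = k := by
    have := Fintype.card_congr e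
    simpa using this
  subst h
  have hs := T.m_symm n p e.symm a
  rw [hs]
  unfold relabel
  simp only [Equiv.symm_symm]

lemma comp_eSplit_eq_append {k : ℕ} (B : Finset (Fin k)) (a : Fin k → A) :
    (fun s => a (eSplit B s)) =
      Fin.append (fun t => a (embJ B t)) (fun t => a (embJ Bᶜ t)) := by
  funext i
  rcases h : finSumFinEquiv.symm i with t | t
  · have hi : i = finSumFinEquiv (Sum.inl t) := by rw [← h, Equiv.apply_symm_apply]
    rw [hi]
    show a (Sum.elim (embJ B) (embJ Bᶜ) (finSumFinEquiv.symm (finSumFinEquiv (Sum.inl t)))) = _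
    rw [Equiv.symm_apply_apply, finSumFinEquiv_apply_left, Fin.append_left]
    rfl
  · have hi : i = finSumFinEquiv (Sum.inr t) := by rw [← h, Equiv.apply_symm_apply]
    rw [hi]
    show a (Sum.elim (embJ B) (embJ Bᶜ) (finSumFinEquiv.symm (finSumFinEquiv (Sum.inr t)))) = _
    rw [Equiv.symm_apply_apply, finSumFinEquiv_apply_right, Fin.append_right]
    rfl

end Reindex

section Merge

variable {k : ℕ}

/-- merge two set partitions along the splitting `B / Bᶜ`. -/
noncomputable def mergeS (B : Finset (Fin k)) (π₁ : Setoid (Fin B.card))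
    (π₂ : Setoid (Fin Bᶜ.card)) : Setoid (Fin k) :=
  Setoid.ker (fun i =>
    if hi : i ∈ B then (Sum.inl (Quotient.mk π₁ (pullJ B i hi)) : Quotient π₁ ⊕ Quotient π₂)
    else Sum.inr (Quotient.mk π₂ (pullJ Bᶜ i (Finset.mem_compl.mpr hi))))

variable {B : Finset (Fin k)} {π₁ : Setoid (Fin B.card)} {π₂ : Setoid (Fin Bᶜ.card)}

lemma mergeS_rel_mem {i j : Fin k} (hi : i ∈ B) (hj : j ∈ B) :
    (mergeS B π₁ π₂) i j ↔ π₁ (pullJ B i hi) (pullJ B j hj) := by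
  show (dite _ _ _ = dite _ _ _) ↔ _
  rw [dif_pos hi, dif_pos hj]
  rw [Sum.inl.injEq, Quotient.eq]

lemma mergeS_rel_notmem {i j : Fin k} (hi : i ∉ B) (hj : j ∉ B) :
    (mergeS B π₁ π₂) i j ↔
      π₂ (pullJ Bᶜ i (Finset.mem_compl.mpr hi)) (pullJ Bᶜ j (Finset.mem_compl.mpr hj)) := by
  show (dite _ _ _ = dite _ _ _) ↔ _
  rw [dif_neg hi, dif_neg hj]
  rw [Sum.inr.injEq, Quotient.eq]

lemma mergeS_rel_mixed {i j : Fin k} (hi : i ∈ B) (hj : j ∉ B) :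
    ¬ (mergeS B π₁ π₂) i j := by
  intro h
  have h' : (dite _ _ _ : Quotient π₁ ⊕ Quotient π₂) = dite _ _ _ := h
  rw [dif_pos hi, dif_neg hj] at h'
  exact Sum.inl_ne_inr h'

lemma restr₁_mergeS : Setoid.comap (embJ B) (mergeS B π₁ π₂) = π₁ := by
  ext t t'
  show (mergeS B π₁ π₂) (embJ B t) (embJ B t') ↔ π₁ t t'
  rw [mergeS_rel_mem (embJ_mem B t) (embJ_mem B t'), pullJ_embJ, pullJ_embJ]

lemma restr₂_mergeS : Setoid.comap (embJ Bᶜ) (mergeS B π₁ π₂) = π₂ := by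
  ext t t'
  show (mergeS B π₁ π₂) (embJ Bᶜ t) (embJ Bᶜ t') ↔ π₂ t t'
  have h1 : embJ Bᶜ t ∉ B := Finset.mem_compl.mp (embJ_mem Bᶜ t)
  have h2 : embJ Bᶜ t' ∉ B := Finset.mem_compl.mp (embJ_mem Bᶜ t')
  rw [mergeS_rel_notmem h1 h2]
  have e1 : pullJ Bᶜ (embJ Bᶜ t) (Finset.mem_compl.mpr h1) = t := pullJ_embJ Bᶜ t
  have e2 : pullJ Bᶜ (embJ Bᶜ t') (Finset.mem_compl.mpr h2) = t' := pullJ_embJ Bᶜ t'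
  rw [e1, e2]

/-- a partition separated by `B` is the merge of its restrictions. -/
lemma mergeS_restr {π : Setoid (Fin k)} (hsep : ∀ i j, π i j → (i ∈ B ↔ j ∈ B)) :
    mergeS B (Setoid.comap (embJ B) π) (Setoid.comap (embJ Bᶜ) π) = π := by
  ext i j
  show (mergeS B _ _) i j ↔ π i j
  by_cases hi : i ∈ B <;> by_cases hj : j ∈ B
  · rw [mergeS_rel_mem hi hj]
    show π (embJ B (pullJ B i hi)) (embJ B (pullJ B j hj)) ↔ _
    rw [embJ_pullJ, embJ_pullJ]
  · rw [iff_false_intro (mergeS_rel_mixed hi hj), false_iff]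
    intro h
    exact hj ((hsep i j h).mp hi)
  · constructor
    · intro h
      exact absurd (Setoid.symm' _ h) (mergeS_rel_mixed hj hi)
    · intro h
      exact absurd ((hsep i j h).mpr hj) hi
  · rw [mergeS_rel_notmem hi hj]
    show π (embJ Bᶜ _) (embJ Bᶜ _) ↔ _
    rw [embJ_pullJ, embJ_pullJ]

/-- the classes of a merged partition. -/
lemma class_mergeS_mem {i : Fin k} (hi : i ∈ B) :
    (Finset.univ.filter fun j => (mergeS B π₁ π₂) i j) =
      (Finset.univ.filter fun t => π₁ (pullJ B i hi) t).image (embJ B) := by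
  ext j
  rw [Finset.mem_image]
  simp only [Finset.mem_filter, Finset.mem_univ, true_and]
  constructor
  · intro h
    have hj : j ∈ B := by
      by_contra hj
      exact mergeS_rel_mixed hi hj h
    refine ⟨pullJ B j hj, ?_, embJ_pullJ B j hj⟩
    exact (mergeS_rel_mem hi hj).mp h
  · rintro ⟨t, ht, rfl⟩
    rw [mergeS_rel_mem hi (embJ_mem B t)]
    rw [pullJ_embJ]
    exact ht

lemma class_mergeS_notmem {i : Fin k} (hi : i ∉ B) :
    (Finset.univ.filter fun j => (mergeS B π₁ π₂) i j) =
      (Finset.univ.filter fun t => π₂ (pullJ Bᶜ i (Finset.mem_compl.mpr hi)) t).image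
        (embJ Bᶜ) := by
  ext j
  rw [Finset.mem_image]
  simp only [Finset.mem_filter, Finset.mem_univ, true_and]
  constructor
  · intro h
    have hj : j ∉ B := by
      by_contra hj
      exact mergeS_rel_mixed hj hi (Setoid.symm' _ h)
    refine ⟨pullJ Bᶜ j (Finset.mem_compl.mpr hj), ?_, embJ_pullJ Bᶜ j _⟩
    exact (mergeS_rel_notmem hi hj).mp h
  · rintro ⟨t, ht, rfl⟩
    have hm : embJ Bᶜ t ∉ B := Finset.mem_compl.mp (embJ_mem Bᶜ t)
    rw [mergeS_rel_notmem hi hm]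
    have e1 : pullJ Bᶜ (embJ Bᶜ t) (Finset.mem_compl.mpr hm) = t := pullJ_embJ Bᶜ t
    rw [e1]
    exact ht

lemma classesOf_mergeS :
    classesOf (mergeS B π₁ π₂) =
      (classesOf π₁).image (Finset.image (embJ B)) ∪
        (classesOf π₂).image (Finset.image (embJ Bᶜ)) := by
  ext b
  constructor
  · intro hb
    obtain ⟨i, rfl⟩ := mem_classesOf.mp hb
    by_cases hi : i ∈ B
    · apply Finset.mem_union_left
      rw [Finset.mem_image]
      exact ⟨_, mem_classesOf.mpr ⟨pullJ B i hi, rfl⟩, (class_mergeS_mem hi).symm⟩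
    · apply Finset.mem_union_right
      rw [Finset.mem_image]
      exact ⟨_, mem_classesOf.mpr ⟨pullJ Bᶜ i (Finset.mem_compl.mpr hi), rfl⟩,
        (class_mergeS_notmem hi).symm⟩
  · intro hb
    rcases Finset.mem_union.mp hb with hb | hb
    · rw [Finset.mem_image] at hb
      obtain ⟨b₁, hb₁, rfl⟩ := hb
      obtain ⟨t, rfl⟩ := mem_classesOf.mp hb₁
      apply mem_classesOf.mpr
      refine ⟨embJ B t, ?_⟩
      have := class_mergeS_mem (π₁ := π₁) (π₂ := π₂) (embJ_mem B t)
      rw [this, pullJ_embJ]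
    · rw [Finset.mem_image] at hb
      obtain ⟨b₂, hb₂, rfl⟩ := hb
      obtain ⟨t, rfl⟩ := mem_classesOf.mp hb₂
      apply mem_classesOf.mpr
      refine ⟨embJ Bᶜ t, ?_⟩
      have hm : embJ Bᶜ t ∉ B := Finset.mem_compl.mp (embJ_mem Bᶜ t)
      have := class_mergeS_notmem (π₁ := π₁) (π₂ := π₂) hm
      rw [this]
      have e1 : pullJ Bᶜ (embJ Bᶜ t) (Finset.mem_compl.mpr hm) = t := pullJ_embJ Bᶜ t
      rw [e1]

end Merge
section CumCast

variable {A : Type*} [Ring A] [Algebra ℂ A]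

omit [Ring A] [Algebra ℂ A] in
lemma cum_cast (cum : ∀ n : ℕ, (Fin n → A) → ℂ) {m n : ℕ} (h : m = n)
    (f : Fin m → A) (g : Fin n → A) (hfg : ∀ t : Fin n, f (Fin.cast h.symm t) = g t) :
    cum m f = cum n g := by
  subst h
  congr 1
  funext t
  exact hfg t

omit [Ring A] [Algebra ℂ A] in
lemma embJ_image {k l : ℕ} (f : Fin l → Fin k) (hf : StrictMono f) (c : Finset (Fin l))
    (hc : (c.image f).card = c.card) (t : Fin (c.image f).card) :
    embJ (c.image f) t = f (embJ c (Fin.cast hc t)) := by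
  have huniq := Finset.orderEmbOfFin_unique (rfl : (c.image f).card = (c.image f).card)
    (f := fun t => f (embJ c (Fin.cast hc t)))
    (fun x => Finset.mem_image_of_mem f (embJ_mem c _))
    (by
      intro x y hxy
      apply hf
      apply embJ_strictMono c
      exact hxy)
  have hemb : ∀ (J : Finset (Fin k)) (t : Fin J.card), embJ J t = J.orderEmbOfFin rfl t := by
    intro J t
    exact Finset.coe_orderIsoOfFin_apply J rfl t
  rw [hemb, ← congrFun huniq t]

omit [Ring A] [Algebra ℂ A] in
lemma cum_image (cum : ∀ n : ℕ, (Fin n → A) → ℂ) {k l : ℕ} (a : Fin k → A)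
    (f : Fin l → Fin k) (hf : StrictMono f) (c : Finset (Fin l)) :
    cum (c.image f).card (fun t => a (embJ (c.image f) t)) =
      cum c.card (fun t => a (f (embJ c t))) := by
  have hc : (c.image f).card = c.card := Finset.card_image_of_injective c hf.injective
  apply cum_cast cum hc
  intro t
  rw [embJ_image f hf c hc]
  have hcc : Fin.cast hc (Fin.cast hc.symm t) = t := Fin.ext (by simp [Fin.coe_cast])
  rw [hcc]

end CumCast

section MergeSum

variable {A : Type*} [Ring A] [Algebra ℂ A] {k : ℕ}

lemma rel_of_mem_class {q : Setoid (Fin k)} {B : Finset (Fin k)} (hB : B ∈ classesOf q)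
    {i j : Fin k} (hi : i ∈ B) (hj : j ∈ B) : q i j := by
  obtain ⟨j₀, rfl⟩ := mem_classesOf.mp hB
  exact Setoid.trans' q (Setoid.symm' q (mem_class_iff.mp hi)) (mem_class_iff.mp hj)

omit [Ring A] [Algebra ℂ A] in
lemma prod_classes_mergeS {B : Finset (Fin k)} (π₁ : Setoid (Fin B.card))
    (π₂ : Setoid (Fin Bᶜ.card)) (F : Finset (Fin k) → ℂ) :
    (∏ b ∈ classesOf (mergeS B π₁ π₂), F b) =
      (∏ b ∈ classesOf π₁, F (b.image (embJ B))) *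
        ∏ b ∈ classesOf π₂, F (b.image (embJ Bᶜ)) := by
  rw [classesOf_mergeS]
  have hdisj : Disjoint ((classesOf π₁).image (Finset.image (embJ B)))
      ((classesOf π₂).image (Finset.image (embJ Bᶜ))) := by
    rw [Finset.disjoint_left]
    intro b hb1 hb2
    obtain ⟨b₁, hb₁, rfl⟩ := Finset.mem_image.mp hb1
    obtain ⟨b₂, hb₂, heq⟩ := Finset.mem_image.mp hb2
    obtain ⟨t, ht⟩ := classesOf_nonempty hb₁
    have h1 : embJ B t ∈ b₁.image (embJ B) := Finset.mem_image_of_mem _ ht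
    rw [← heq] at h1
    obtain ⟨t', _, ht'⟩ := Finset.mem_image.mp h1
    have : embJ B t ∈ B := embJ_mem B t
    rw [← ht'] at this
    exact Finset.mem_compl.mp (embJ_mem Bᶜ t') this
  rw [Finset.prod_union hdisj,
    Finset.prod_image (fun x _ y _ h => Finset.image_injective (embJ_inj B) h),
    Finset.prod_image (fun x _ y _ h => Finset.image_injective (embJ_inj Bᶜ) h)]

lemma mergeS_le_colSetoid {p : PP k} {B : Finset (Fin k)} (hB : B ∈ classesOf (colSetoid p))
    {π₁ : Setoid (Fin B.card)} {π₂ : Setoid (Fin Bᶜ.card)}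
    (h2 : π₂ ≤ colSetoid (extractP p Bᶜ)) : mergeS B π₁ π₂ ≤ colSetoid p := by
  intro i j hij
  by_cases hi : i ∈ B <;> by_cases hj : j ∈ B
  · exact rel_of_mem_class hB hi hj
  · exact absurd hij (mergeS_rel_mixed hi hj)
  · exact absurd (Setoid.symm' _ hij) (mergeS_rel_mixed hj hi)
  · have := (mergeS_rel_notmem hi hj).mp hij
    have h3 := h2 this
    have h4 := (col_transfer p Bᶜ (notmem_compl_closed (classesOf_closed hB)) _ _).mp h3
    rw [embJ_pullJ, embJ_pullJ] at h4
    exact h4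

lemma restr₂_le_colSetoid {p : PP k} {B : Finset (Fin k)} (hB : B ∈ classesOf (colSetoid p))
    {π : Setoid (Fin k)} (hπ : π ≤ colSetoid p) :
    Setoid.comap (embJ Bᶜ) π ≤ colSetoid (extractP p Bᶜ) := by
  intro t t' h
  show (colSetoid (extractP p Bᶜ)) t t'
  rw [col_transfer p Bᶜ (notmem_compl_closed (classesOf_closed hB))]
  exact hπ h

omit [Ring A] [Algebra ℂ A] in
lemma merge_sum (cum : ∀ n : ℕ, (Fin n → A) → ℂ) (p : PP k) (B : Finset (Fin k))
    (hB : B ∈ classesOf (colSetoid p)) (a : Fin k → A) :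
    ((∑ π₁ : Setoid (Fin B.card),
        ∏ b ∈ classesOf π₁, cum b.card fun t => a (embJ B (embJ b t))) *
      ∑ π₂ : Setoid (Fin Bᶜ.card),
        if π₂ ≤ colSetoid (extractP p Bᶜ) then
          ∏ b ∈ classesOf π₂, cum b.card fun t => a (embJ Bᶜ (embJ b t))
        else 0) =
      ∑ π : Setoid (Fin k),
        if π ≤ colSetoid p then ∏ b ∈ classesOf π, cum b.card fun t => a (embJ b t)
        else 0 := by
  classical
  have key : ∀ (π₁ : Setoid (Fin B.card)) (π₂ : Setoid (Fin Bᶜ.card)),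
      (∏ b ∈ classesOf (mergeS B π₁ π₂), cum b.card fun t => a (embJ b t)) =
        (∏ b ∈ classesOf π₁, cum b.card fun t => a (embJ B (embJ b t))) *
          ∏ b ∈ classesOf π₂, cum b.card fun t => a (embJ Bᶜ (embJ b t)) := by
    intro π₁ π₂
    rw [prod_classes_mergeS π₁ π₂]
    congr 1
    · apply Finset.prod_congr rfl
      intro b _
      exact cum_image cum a (embJ B) (embJ_strictMono B) b
    · apply Finset.prod_congr rfl
      intro b _
      exact cum_image cum a (embJ Bᶜ) (embJ_strictMono Bᶜ) b
  rw [Finset.sum_mul_sum]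
  have step1 : ∀ π₁ : Setoid (Fin B.card),
      (∑ π₂ : Setoid (Fin Bᶜ.card),
        (∏ b ∈ classesOf π₁, cum b.card fun t => a (embJ B (embJ b t))) *
          (if π₂ ≤ colSetoid (extractP p Bᶜ) then
            ∏ b ∈ classesOf π₂, cum b.card fun t => a (embJ Bᶜ (embJ b t)) else 0)) =
      ∑ π₂ : Setoid (Fin Bᶜ.card),
        if π₂ ≤ colSetoid (extractP p Bᶜ) then
          ∏ b ∈ classesOf (mergeS B π₁ π₂), cum b.card fun t => a (embJ b t) else 0 := by
    intro π₁
    apply Finset.sum_congr rfl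
    intro π₂ _
    rw [mul_ite, mul_zero, key π₁ π₂]
  rw [Finset.sum_congr rfl (fun π₁ _ => step1 π₁)]
  rw [← Finset.sum_product']
  rw [← Finset.sum_filter (fun q : Setoid (Fin B.card) × Setoid (Fin Bᶜ.card) =>
    q.2 ≤ colSetoid (extractP p Bᶜ))
    (fun q => ∏ b ∈ classesOf (mergeS B q.1 q.2), cum b.card fun t => a (embJ b t)),
    ← Finset.sum_filter (fun π : Setoid (Fin k) => π ≤ colSetoid p)
    (fun π => ∏ b ∈ classesOf π, cum b.card fun t => a (embJ b t))]
  apply Finset.sum_nbij' (i := fun q => mergeS B q.1 q.2)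
    (j := fun π => (Setoid.comap (embJ B) π, Setoid.comap (embJ Bᶜ) π))
  · intro q hq
    rw [Finset.mem_filter] at hq ⊢
    exact ⟨Finset.mem_univ _, mergeS_le_colSetoid hB hq.2⟩
  · intro π hπ
    rw [Finset.mem_filter] at hπ ⊢
    exact ⟨Finset.mem_product.mpr ⟨Finset.mem_univ _, Finset.mem_univ _⟩,
      restr₂_le_colSetoid hB hπ.2⟩
  · intro q _
    exact Prod.ext restr₁_mergeS restr₂_mergeS
  · intro π hπ
    rw [Finset.mem_filter] at hπ
    apply mergeS_restr
    intro i j hij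
    exact classesOf_closed hB i j (hπ.2 hij)
  · intro q _
    rfl

end MergeSum
section MainM

variable {A : Type*} [Ring A] [Algebra ℂ A]

lemma setoid_subsingleton {α : Type*} [IsEmpty α] : Subsingleton (Setoid α) :=
  ⟨fun s t => Setoid.ext fun x => isEmptyElim x⟩

lemma main_M (T : PTracial A) (A₁ : Set A)
    (hdet : ∀ (k₁ k₂ : ℕ) (p₁ : PP k₁) (p₂ : PP k₂) (a : Fin k₁ → A) (b : Fin k₂ → A),
      (∀ s, a s ∈ A₁) → (∀ s, b s ∈ A₁) →
      T.m (k₁ + k₂) (ptensor p₁ p₂) (Fin.append a b) = T.m k₁ p₁ a * T.m k₂ p₂ b)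
    (hclass : ∀ (k : ℕ) (p : PP k) (a : Fin k → A), (∀ s, a s ∈ A₁) →
      nC (p ⊔ idP k) = 1 → T.m k p a = T.m k ⊤ a)
    (cum : ∀ n : ℕ, (Fin n → A) → ℂ)
    (hcum : ∀ (n : ℕ) (a : Fin n → A), (∀ s, a s ∈ A₁) →
      T.m n ⊤ a = ∑ π : Setoid (Fin n),
        ∏ b ∈ classesOf π, cum b.card fun t => a ((b.orderIsoOfFin rfl t : b) : Fin n)) :
    ∀ (k : ℕ) (p : PP k) (a : Fin k → A), (∀ s, a s ∈ A₁) →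
      T.m k p a = ∑ π : Setoid (Fin k),
        if π ≤ colSetoid p then ∏ b ∈ classesOf π, cum b.card fun t => a (embJ b t)
        else 0 := by
  intro k
  induction k using Nat.strong_induction_on with
  | _ k IH =>
    intro p a ha
    by_cases hall : ∀ i j : Fin k, (colSetoid p) i j
    · have hcol : colSetoid p = ⊤ := by
        ext i j
        exact iff_of_true (hall i j) trivial
      have hsum : (∑ π : Setoid (Fin k),
          if π ≤ colSetoid p then ∏ b ∈ classesOf π, cum b.card fun t => a (embJ b t)
          else 0) =
          ∑ π : Setoid (Fin k), ∏ b ∈ classesOf π, cum b.card fun t => a (embJ b t) := by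
        apply Finset.sum_congr rfl
        intro π _
        rw [if_pos (by rw [hcol]; exact le_top)]
      rw [hsum]
      rcases Nat.eq_zero_or_pos k with hk | hk
      · subst hk
        haveI : Subsingleton (PP 0) := setoid_subsingleton
        have hp : p = ⊤ := Subsingleton.elim p ⊤
        rw [hp]
        exact hcum 0 a ha
      · have hirr : nC (p ⊔ idP k) = 1 := by
          rw [sup_idP_toFull, nC_toFull, hcol, nC_top hk]
        rw [hclass k p a ha hirr]
        exact hcum k a ha
    · push_neg at hall
      obtain ⟨i, j, hij⟩ := hall
      set B : Finset (Fin k) := Finset.univ.filter fun j' => (colSetoid p) i j' with hBdef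
      have hB : B ∈ classesOf (colSetoid p) := mem_classesOf.mpr ⟨i, rfl⟩
      have hiB : i ∈ B := mem_class_iff.mpr (Setoid.refl' _ i)
      have hjB : j ∉ B := fun hj => hij (mem_class_iff.mp hj)
      have hjBc : j ∈ Bᶜ := Finset.mem_compl.mpr hjB
      have hcardB : 0 < B.card := Finset.card_pos.mpr ⟨i, hiB⟩
      have hcardC : 0 < Bᶜ.card := Finset.card_pos.mpr ⟨j, hjBc⟩
      have hkk : B.card + Bᶜ.card = k := card_compl_add B
      have hC_lt : Bᶜ.card < k := by omega
      have h1 : T.m k p a = T.m (B.card + Bᶜ.card) (ptensor (extractP p B) (extractP p Bᶜ))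
          (Fin.append (fun t => a (embJ B t)) (fun t => a (embJ Bᶜ t))) := by
        rw [m_reindex T (eSplit B) p a,
          comap_eSplit_eq_ptensor p B (classesOf_closed hB), comp_eSplit_eq_append]
      have h2 : T.m (B.card + Bᶜ.card) (ptensor (extractP p B) (extractP p Bᶜ))
          (Fin.append (fun t => a (embJ B t)) (fun t => a (embJ Bᶜ t))) =
          T.m B.card (extractP p B) (fun t => a (embJ B t)) *
            T.m Bᶜ.card (extractP p Bᶜ) (fun t => a (embJ Bᶜ t)) :=
        hdet B.card Bᶜ.card _ _ _ _ (fun s => ha _) (fun s => ha _)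
      have h3 : T.m B.card (extractP p B) (fun t => a (embJ B t)) =
          ∑ π₁ : Setoid (Fin B.card),
            ∏ b ∈ classesOf π₁, cum b.card fun t => a (embJ B (embJ b t)) := by
        rw [hclass B.card _ _ (fun s => ha _) (extract_irreducible hB hcardB)]
        exact hcum B.card _ (fun s => ha _)
      have h4 : T.m Bᶜ.card (extractP p Bᶜ) (fun t => a (embJ Bᶜ t)) =
          ∑ π₂ : Setoid (Fin Bᶜ.card),
            if π₂ ≤ colSetoid (extractP p Bᶜ) then
              ∏ b ∈ classesOf π₂, cum b.card fun t => a (embJ Bᶜ (embJ b t))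
            else 0 :=
        IH Bᶜ.card hC_lt (extractP p Bᶜ) _ (fun s => ha _)
      rw [h1, h2, h3, h4]
      exact merge_sum cum p B hB a

end MainM
section Inversion

variable {k : ℕ}

lemma inversion (f g : PP k → ℂ)
    (h : ∀ p0 : PP k, (∑ p' : PP k, if pLe p' p0 then f p' else 0) =
      ∑ p' : PP k, if pLe p' p0 then g p' else 0) (p0 : PP k) : f p0 = g p0 := by
  have main : ∀ (n : ℕ) (q : PP k), (d2 (idP k) q).toNat = n → f q = g q := by
    intro n
    induction n using Nat.strong_induction_on with
    | _ n IHn =>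
      intro q hq
      have hsplit : ∀ u : PP k → ℂ, (∑ p' : PP k, if pLe p' q then u p' else 0) =
          u q + ∑ p' ∈ Finset.univ.erase q, if pLe p' q then u p' else 0 := by
        intro u
        rw [← Finset.add_sum_erase _ _ (Finset.mem_univ q), if_pos (pLe_refl q)]
      have hrest : (∑ p' ∈ Finset.univ.erase q, if pLe p' q then f p' else 0) =
          ∑ p' ∈ Finset.univ.erase q, if pLe p' q then g p' else 0 := by
        apply Finset.sum_congr rfl
        intro p' hp'
        have hne : p' ≠ q := (Finset.mem_erase.mp hp').1
        by_cases hle : pLe p' q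
        · rw [if_pos hle, if_pos hle]
          apply IHn (d2 (idP k) p').toNat _ p' rfl
          have h1 := d2_lt_of_pLe hle hne
          have h2 := d2_nonneg (idP k) p'
          omega
        · rw [if_neg hle, if_neg hle]
      have hq' := h q
      rw [hsplit f, hsplit g, hrest] at hq'
      exact add_right_cancel hq'
  exact main _ p0 rfl

lemma extract_toFull_top (π : Setoid (Fin k)) {b : Finset (Fin k)} (hb : b ∈ classesOf π) :
    extractP (toFull π) b = ⊤ := by
  apply le_antisymm le_top
  intro u v _
  show π (colv (Sum.map (embJ b) (embJ b) u)) (colv (Sum.map (embJ b) (embJ b) v))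
  rw [colv_map, colv_map]
  exact rel_of_mem_class hb (embJ_mem b _) (embJ_mem b _)

lemma toFull_eq_of_extract_top (p' : PP k)
    (h : ∀ b ∈ classesOf (colSetoid p'), extractP p' b = ⊤) :
    p' = toFull (colSetoid p') := by
  ext x y
  constructor
  · intro hxy
    exact rel_col p' hxy
  · intro hxy
    have hxy' : (colSetoid p') (colv x) (colv y) := hxy
    set B : Finset (Fin k) := Finset.univ.filter fun j' => (colSetoid p') (colv x) j'
      with hBdef
    have hB : B ∈ classesOf (colSetoid p') := mem_classesOf.mpr ⟨colv x, rfl⟩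
    have hx : colv x ∈ B := mem_class_iff.mpr (Setoid.refl' _ _)
    have hy : colv y ∈ B := mem_class_iff.mpr hxy'
    have htop := h B hB
    have hrel : (extractP p' B) (pullV B x hx) (pullV B y hy) := by
      rw [htop]
      trivial
    have := (extract_rel p' B _ _).mp hrel
    rw [map_pullV, map_pullV] at this
    exact this

lemma toFull_injective : Function.Injective (toFull (k := k)) := by
  intro π π' h
  rw [← colSetoid_toFull π, h, colSetoid_toFull]

lemma g_toFull {A : Type*} (cum : ∀ n : ℕ, (Fin n → A) → ℂ) (a : Fin k → A)
    (π : Setoid (Fin k)) :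
    (∏ b ∈ classesOf (colSetoid (toFull π)),
      if extractP (toFull π) b = ⊤ then cum b.card fun t => a (embJ b t) else 0) =
      ∏ b ∈ classesOf π, cum b.card fun t => a (embJ b t) := by
  rw [colSetoid_toFull]
  apply Finset.prod_congr rfl
  intro b hb
  rw [if_pos (extract_toFull_top π hb)]

end Inversion

/-- For a classical family `A₁` (deterministic, and with `m_p = m_{0_k}`
for every irreducible `p`), the `P`-cumulants of tuples from `A₁` are
`κ_p(a₁,…,a_k) = ∏_{b cycle of p} δ_{p_{|b} = 0} · cum_{|b|}((a_i)_{i∈b})`, where the `cum`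
are the classical cumulants of the family (defined by the classical moment–cumulant
relation with respect to `m_{0_n} = m_⊤`). -/
theorem classical_family_cumulants {A : Type*} [Ring A] [Algebra ℂ A] (T : PTracial A)
    (κ : ∀ k : ℕ, PP k → (Fin k → A) → ℂ)
    (hκ : ∀ (k : ℕ) (p : PP k) (a : Fin k → A),
      T.m k p a = ∑ p' : PP k, if pLe p' p then κ k p' a else 0)
    (A₁ : Set A)
    (hdet : ∀ (k₁ k₂ : ℕ) (p₁ : PP k₁) (p₂ : PP k₂) (a : Fin k₁ → A) (b : Fin k₂ → A),
      (∀ s, a s ∈ A₁) → (∀ s, b s ∈ A₁) →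
      T.m (k₁ + k₂) (ptensor p₁ p₂) (Fin.append a b) = T.m k₁ p₁ a * T.m k₂ p₂ b)
    (hclass : ∀ (k : ℕ) (p : PP k) (a : Fin k → A), (∀ s, a s ∈ A₁) →
      nC (p ⊔ idP k) = 1 → T.m k p a = T.m k ⊤ a)
    (cum : ∀ n : ℕ, (Fin n → A) → ℂ)
    (hcum : ∀ (n : ℕ) (a : Fin n → A), (∀ s, a s ∈ A₁) →
      T.m n ⊤ a = ∑ π : Setoid (Fin n),
        ∏ b ∈ classesOf π, cum b.card fun t => a ((b.orderIsoOfFin rfl t : b) : Fin n))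
    (k : ℕ) (p : PP k) (a : Fin k → A) (ha : ∀ s, a s ∈ A₁) :
    κ k p a = ∏ b ∈ classesOf (colSetoid p),
      if extractP p b = (⊤ : PP b.card) then
        cum b.card fun t => a ((b.orderIsoOfFin rfl t : b) : Fin k)
      else 0 := by
  classical
  set g : PP k → ℂ := fun p' => ∏ b ∈ classesOf (colSetoid p'),
    if extractP p' b = (⊤ : PP b.card) then cum b.card fun t => a (embJ b t) else 0 with hgdef
  have hg : ∀ p0 : PP k, (∑ p' : PP k, if pLe p' p0 then g p' else 0) = T.m k p0 a := by
    intro p0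
    have hzero : ∀ p' ∈ Finset.univ (α := PP k),
        p' ∉ Finset.univ.image (toFull (k := k)) → (if pLe p' p0 then g p' else 0) = 0 := by
      intro p' _ hp'
      by_cases hle : pLe p' p0
      swap
      · rw [if_neg hle]
      rw [if_pos hle]
      by_cases hext : ∀ b ∈ classesOf (colSetoid p'), extractP p' b = ⊤
      · exact absurd (Finset.mem_image.mpr
          ⟨colSetoid p', Finset.mem_univ _, (toFull_eq_of_extract_top p' hext).symm⟩) hp'
      · push_neg at hext
        obtain ⟨b, hb, hbne⟩ := hext
        rw [hgdef]
        apply Finset.prod_eq_zero hb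
        rw [if_neg hbne]
    have step1 : (∑ p' : PP k, if pLe p' p0 then g p' else 0) =
        ∑ p' ∈ Finset.univ.image (toFull (k := k)), if pLe p' p0 then g p' else 0 :=
      (Finset.sum_subset (Finset.subset_univ _) hzero).symm
    have step2 : (∑ p' ∈ Finset.univ.image (toFull (k := k)),
        if pLe p' p0 then g p' else 0) =
        ∑ π : Setoid (Fin k), if pLe (toFull π) p0 then g (toFull π) else 0 :=
      Finset.sum_image (fun x _ y _ h => toFull_injective h)
    have step3 : (∑ π : Setoid (Fin k), if pLe (toFull π) p0 then g (toFull π) else 0) =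
        ∑ π : Setoid (Fin k), if π ≤ colSetoid p0 then
          ∏ b ∈ classesOf π, cum b.card fun t => a (embJ b t) else 0 := by
      apply Finset.sum_congr rfl
      intro π _
      by_cases hle : π ≤ colSetoid p0
      · rw [if_pos ((pLe_toFull_iff π p0).mpr hle), if_pos hle]
        exact g_toFull cum a π
      · rw [if_neg (fun hc => hle ((pLe_toFull_iff π p0).mp hc)), if_neg hle]
    rw [step1, step2, step3]
    exact (main_M T A₁ hdet hclass cum hcum k p0 a ha).symm
  have hfg : ∀ p0 : PP k, (∑ p' : PP k, if pLe p' p0 then κ k p' a else 0) =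
      ∑ p' : PP k, if pLe p' p0 then g p' else 0 := by
    intro p0
    rw [← hκ k p0 a, hg p0]
  exact inversion (fun p' => κ k p' a) g hfg p
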